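/- arXiv:1406.7174 — 5 statements merged into one kernel-verified Lean document; each statement's English description precedes it below -/
import Mathlib

section
/- Let A be a finite-dimensional commutative algebra over a field K, f ∈ A, and n ≥ dim_K A. Then the saturation (0 : f^∞) equals the kernel of the n-th power of multiplication by f (the 'generalized 0-eigenspace' of multiplication by f), and the localization A_f is isomorphic to the quotient algebra A / ker((·f)^n), with the canonical localization map A → A_f corresponding to the quotient map. -/
/-- Stabilization of kernels: if `f^k * a = 0` for some `k`, then `f^n * a = 0` for any
`n ≥ finrank K A`. -/
lemma mulKer_key {K : Type*} [Field K] {A : Type*} [CommRing A] [Algebra K A]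
    [FiniteDimensional K A]
    (f : A) {n : ℕ} (hn : Module.finrank K A ≤ n) {k : ℕ} {a : A} (h : f ^ k * a = 0) :
    f ^ n * a = 0 := by
  have h1 : a ∈ LinearMap.ker ((LinearMap.mulLeft K f) ^ k) := by
    simpa [LinearMap.pow_mulLeft] using h
  have h2 := Module.End.ker_pow_le_ker_pow_finrank (LinearMap.mulLeft K f) k h1
  have h3 : LinearMap.ker ((LinearMap.mulLeft K f) ^ n)
      = LinearMap.ker ((LinearMap.mulLeft K f) ^ Module.finrank K A) :=
    Module.End.ker_pow_eq_ker_pow_finrank_of_le hn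
  rw [← h3] at h2
  simpa [LinearMap.pow_mulLeft] using h2

/-- The ideal `{a : A | g * a = 0}`; for `g = f^n` with `n ≥ dim A` this is the kernel of
the `n`-th power of multiplication by `f`, i.e. the "generalized 0-eigenspace" of `(·f)`. -/
def mulKerIdeal {A : Type*} [CommRing A] (g : A) : Ideal A where
  carrier := {a : A | g * a = 0}
  zero_mem' := by simp
  add_mem' := by
    intro a b ha hb
    simp only [Set.mem_setOf_eq] at *
    rw [mul_add, ha, hb, add_zero]
  smul_mem' := by
    intro c a ha
    simp only [smul_eq_mul, Set.mem_setOf_eq] at *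
    rw [mul_left_comm, ha, mul_zero]

lemma mem_mulKerIdeal_iff {A : Type*} [CommRing A] (g a : A) :
    a ∈ mulKerIdeal g ↔ g * a = 0 := Iff.rfl

/-- The quotient `A ⧸ ker((·f)^n)` is a localization of `A` away from `f`. -/
lemma isLocalization_quotient_mulKerIdeal {K : Type*} [Field K] {A : Type*} [CommRing A]
    [Algebra K A] [FiniteDimensional K A]
    (f : A) {n : ℕ} (hn : Module.finrank K A ≤ n) :
    IsLocalization.Away f (A ⧸ mulKerIdeal (f ^ n)) := by
  set I := mulKerIdeal (f ^ n) with hI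
  have hmk : ∀ a : A, algebraMap A (A ⧸ I) a = Ideal.Quotient.mk I a := fun a => rfl
  -- multiplication by `mk f` is injective on the quotient
  have hinj : Function.Injective (LinearMap.mulLeft K (Ideal.Quotient.mk I f)) := by
    rw [injective_iff_map_eq_zero]
    intro x hx
    obtain ⟨a, rfl⟩ := Ideal.Quotient.mk_surjective x
    simp only [LinearMap.mulLeft_apply, ← map_mul] at hx
    rw [Ideal.Quotient.eq_zero_iff_mem, mem_mulKerIdeal_iff] at hx ⊢
    have : f ^ (n + 1) * a = 0 := by rw [pow_succ]; rw [mul_assoc]; exact hx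
    exact mulKer_key f hn this
  -- hence surjective (finite dimensionality), so `mk f` is a unit
  have hsurj : Function.Surjective (LinearMap.mulLeft K (Ideal.Quotient.mk I f)) :=
    (LinearMap.injective_iff_surjective).mp hinj
  obtain ⟨y, hy⟩ := hsurj 1
  have hfu : IsUnit (Ideal.Quotient.mk I f) :=
    IsUnit.of_mul_eq_one y (by simpa using hy)
  refine ⟨?_, ?_, ?_⟩
  · rintro ⟨s, k, rfl⟩
    simpa [hmk] using hfu.pow k
  · intro z
    obtain ⟨a, rfl⟩ := Ideal.Quotient.mk_surjective z
    exact ⟨⟨a, 1⟩, by simp [hmk]⟩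
  · intro a b h
    simp only [hmk] at h
    rw [Ideal.Quotient.mk_eq_mk_iff_sub_mem, mem_mulKerIdeal_iff, mul_sub, sub_eq_zero] at h
    exact ⟨⟨f ^ n, n, rfl⟩, h⟩

/-- For a finite-dimensional commutative algebra `A` over a field `K`, `f ∈ A` and
`n ≥ dim_K A`: the saturation `(0 : f^∞)` equals `ker((·f)^n)`, and the localization
`A_f` is isomorphic to `A / ker((·f)^n)`, with the canonical localization map
corresponding to the quotient map. -/
theorem localization_away_eq_quotient_generalized_kernel
    (K : Type*) [Field K] (A : Type*) [CommRing A] [Algebra K A] [FiniteDimensional K A]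
    (f : A) (n : ℕ) (hn : Module.finrank K A ≤ n) :
    (∀ a : A, (∃ k : ℕ, f ^ k * a = 0) ↔ f ^ n * a = 0) ∧
    ∃ e : (A ⧸ mulKerIdeal (f ^ n)) ≃ₐ[K] Localization.Away f,
      ∀ a : A, e (Ideal.Quotient.mk _ a) = algebraMap A (Localization.Away f) a := by
  constructor
  · intro a
    exact ⟨fun ⟨k, hk⟩ => mulKer_key f hn hk, fun h => ⟨n, h⟩⟩
  · haveI := isLocalization_quotient_mulKerIdeal (K := K) f hn
    let e' : (A ⧸ mulKerIdeal (f ^ n)) ≃ₐ[A] Localization.Away f :=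
      IsLocalization.algEquiv (Submonoid.powers f) _ _
    refine ⟨e'.restrictScalars K, fun a => ?_⟩
    have : (Ideal.Quotient.mk (mulKerIdeal (f ^ n)) a)
        = algebraMap A (A ⧸ mulKerIdeal (f ^ n)) a := rfl
    rw [AlgEquiv.restrictScalars_apply, this, AlgEquiv.commutes]
end

section
/- Let e_1, …, e_r ∈ ℝ^n positively span ℝ^n, in the sense that for every nonzero u ∈ ℝ^n there exists i with ⟨e_i, u⟩ > 0, and let a_1, …, a_r > 0. Then the function f(u) = Σ a_i exp(⟨e_i, u⟩) tends to +∞ as ‖u‖ → ∞, attains a global minimum at some u* ∈ ℝ^n, and u* is a critical point of f (∇f(u*) = 0). In particular, the Laurent polynomial W(z) = Σ a_i z^{e_i} (with e_i ∈ ℤ^n) has a critical point in (ℝ_{>0})^n, namely z = exp(u*) coordinatewise. -/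
open Filter

private lemma exp_intCast_mul (x : ℝ) (m : ℤ) : Real.exp ((m:ℝ) * x) = Real.exp x ^ m := by
  rw [← Real.rpow_intCast, Real.rpow_def_of_pos (Real.exp_pos x), Real.log_exp, mul_comm]

set_option maxHeartbeats 1000000 in

/-- Galkin's existence step: if `e_1,…,e_r ∈ ℤ^n` positively span `ℝ^n` (for every
`u ≠ 0` some `⟨e_i,u⟩ > 0`) and `a_i > 0`, then `f(u) = Σ a_i exp(⟨e_i,u⟩)` tends to
`+∞` as `‖u‖ → ∞`, attains a global minimum at some critical point `u₀`, and hence the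
Laurent polynomial `W(z) = Σ a_i z^{e_i}` has a critical point with positive real
coordinates, namely `z = exp(u₀)` coordinatewise. -/
theorem sum_exp_has_critical_point (n r : ℕ) (e : Fin r → Fin n → ℤ)
    (a : Fin r → ℝ) (ha : ∀ i, 0 < a i)
    (hspan : ∀ u : Fin n → ℝ, u ≠ 0 → ∃ i, 0 < ∑ j, (e i j : ℝ) * u j) :
    Tendsto (fun u : Fin n → ℝ => ∑ i, a i * Real.exp (∑ j, (e i j : ℝ) * u j))
        (Filter.comap norm Filter.atTop) Filter.atTop ∧
    ∃ u₀ : Fin n → ℝ,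
      (∀ u : Fin n → ℝ,
        (∑ i, a i * Real.exp (∑ j, (e i j : ℝ) * u₀ j)) ≤
          ∑ i, a i * Real.exp (∑ j, (e i j : ℝ) * u j)) ∧
      fderiv ℝ (fun u : Fin n → ℝ => ∑ i, a i * Real.exp (∑ j, (e i j : ℝ) * u j)) u₀ = 0 ∧
      (∀ l : Fin n, 0 < Real.exp (u₀ l)) ∧
      (∀ j : Fin n, ∑ i, a i * (e i j : ℝ) * ∏ l, (Real.exp (u₀ l)) ^ (e i l) = 0) := by
  set f : (Fin n → ℝ) → ℝ := fun u => ∑ i, a i * Real.exp (∑ j, (e i j : ℝ) * u j) with hf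
  set L : Fin r → (Fin n → ℝ) →L[ℝ] ℝ :=
    fun i => ∑ j, (e i j : ℝ) • (ContinuousLinearMap.proj j) with hL
  have hLapp : ∀ i u, L i u = ∑ j, (e i j : ℝ) * u j := by
    intro i u; simp [hL]
  have hf2 : f = fun u => ∑ i, a i * Real.exp (L i u) := by
    funext u; simp [hf, hLapp]
  have hderiv : ∀ u : Fin n → ℝ,
      HasFDerivAt f (∑ i, (a i * Real.exp (L i u)) • L i) u := by
    intro u
    rw [hf2]
    apply HasFDerivAt.fun_sum
    intro i _
    simpa [smul_smul] using ((L i).hasFDerivAt.exp).const_mul (a i)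
  have hcont : Continuous f := by
    rw [hf2]
    exact continuous_finset_sum _ fun i _ =>
      continuous_const.mul (Real.continuous_exp.comp (L i).continuous)
  rcases Nat.eq_zero_or_pos n with hn | hn
  · subst hn
    haveI : Subsingleton (Fin 0 → ℝ) := ⟨fun u v => funext fun j => j.elim0⟩
    have hbot : (Filter.comap (norm : (Fin 0 → ℝ) → ℝ) Filter.atTop) = ⊥ := by
      rw [← Filter.empty_mem_iff_bot]
      refine ⟨Set.Ioi 0, Ioi_mem_atTop 0, ?_⟩
      intro u hu
      have : u = 0 := Subsingleton.elim u 0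
      simp [this, Set.mem_Ioi] at hu
    constructor
    · rw [hbot]; exact tendsto_bot
    · refine ⟨0, fun u => le_of_eq (by rw [Subsingleton.elim (0 : Fin 0 → ℝ) u]), ?_,
        fun l => Real.exp_pos _, fun j => j.elim0⟩
      ext x
      rw [Subsingleton.elim x (0 : Fin 0 → ℝ)]
      exact ContinuousLinearMap.map_zero _
  · -- main case n > 0
    -- r > 0
    haveI hNe : Nonempty (Fin n) := ⟨⟨0, hn⟩⟩
    have hone : (Pi.single (⟨0, hn⟩ : Fin n) (1:ℝ) : Fin n → ℝ) ≠ 0 := by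
      intro h
      have := congrFun h ⟨0, hn⟩
      simp at this
    obtain ⟨i₀, -⟩ := hspan _ hone
    haveI : Nonempty (Fin r) := ⟨i₀⟩
    have hr : (Finset.univ : Finset (Fin r)).Nonempty := Finset.univ_nonempty
    haveI : Nontrivial (Fin n → ℝ) := ⟨⟨Pi.single ⟨0, hn⟩ 1, 0, hone⟩⟩
    -- minimum of max_i L i u on the unit sphere
    set S := Metric.sphere (0 : Fin n → ℝ) 1 with hS
    have hSne : S.Nonempty := NormedSpace.sphere_nonempty.mpr zero_le_one
    have hφcont : Continuous fun u => Finset.univ.sup' hr (fun i => L i u) :=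
      Continuous.finset_sup'_apply hr fun i _ => (L i).continuous
    obtain ⟨v, hvS, hvmin⟩ :=
      (isCompact_sphere (0 : Fin n → ℝ) 1).exists_isMinOn hSne hφcont.continuousOn
    set c := Finset.univ.sup' hr (fun i => L i v) with hc
    have hvnorm : ‖v‖ = 1 := by simpa using hvS
    have hv0 : v ≠ 0 := fun h => by simp [h] at hvnorm
    obtain ⟨iv, hiv⟩ := hspan v hv0
    have hcpos : 0 < c := lt_of_lt_of_le (by simpa [hLapp] using hiv)
      (Finset.le_sup' (fun i => L i v) (Finset.mem_univ iv))
    -- key inequality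
    have key : ∀ u : Fin n → ℝ, ∃ i, c * ‖u‖ ≤ L i u := by
      intro u
      rcases eq_or_ne u 0 with rfl | hu
      · exact ⟨i₀, by simp⟩
      · have hnu : (0:ℝ) < ‖u‖ := norm_pos_iff.mpr hu
        have hw : (‖u‖⁻¹ • u) ∈ S := by
          simp [hS, norm_smul, abs_of_pos (inv_pos.mpr hnu), inv_mul_cancel₀ hnu.ne']
        obtain ⟨i, -, hieq⟩ := Finset.exists_mem_eq_sup' hr (fun i => L i (‖u‖⁻¹ • u))
        refine ⟨i, ?_⟩
        have h1 : c ≤ L i (‖u‖⁻¹ • u) := hieq ▸ hvmin hw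
        have h2 : L i (‖u‖⁻¹ • u) = ‖u‖⁻¹ * L i u := by
          rw [map_smul]; rfl
        rw [h2] at h1
        calc c * ‖u‖ ≤ (‖u‖⁻¹ * L i u) * ‖u‖ := by
              exact mul_le_mul_of_nonneg_right h1 hnu.le
          _ = L i u := by field_simp
    -- lower bound for f
    set A := Finset.univ.inf' hr a with hA
    have hApos : 0 < A := (Finset.lt_inf'_iff hr).mpr (fun i _ => ha i)
    have hbound : ∀ u : Fin n → ℝ, A * Real.exp (c * ‖u‖) ≤ f u := by
      intro u
      obtain ⟨i, hi⟩ := key u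
      calc A * Real.exp (c * ‖u‖) ≤ a i * Real.exp (L i u) := by
            exact mul_le_mul (Finset.inf'_le a (Finset.mem_univ i))
              (Real.exp_le_exp.mpr hi) (Real.exp_pos _).le (ha i).le
        _ ≤ ∑ i', a i' * Real.exp (L i' u) :=
            Finset.single_le_sum
              (fun i' _ => (mul_pos (ha i') (Real.exp_pos (L i' u))).le) (Finset.mem_univ i)
        _ = f u := by rw [hf2]
    have htend : Tendsto f (Filter.comap norm Filter.atTop) Filter.atTop := by
      have h1 : Tendsto (fun t : ℝ => A * Real.exp (c * t)) atTop atTop :=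
        (Real.tendsto_exp_atTop.comp (tendsto_id.const_mul_atTop hcpos)).const_mul_atTop hApos
      exact tendsto_atTop_mono hbound (h1.comp tendsto_comap)
    refine ⟨htend, ?_⟩
    obtain ⟨u₀, hu₀⟩ := hcont.exists_forall_le
      (htend.mono_left (tendsto_iff_comap.mp tendsto_norm_cocompact_atTop))
    have hloc : IsLocalMin f u₀ := Filter.Eventually.of_forall hu₀
    have hD0 : (∑ i, (a i * Real.exp (L i u₀)) • L i) = 0 := by
      rw [← (hderiv u₀).fderiv]
      exact hloc.fderiv_eq_zero
    refine ⟨u₀, hu₀, ?_, fun l => Real.exp_pos _, ?_⟩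
    · rw [(hderiv u₀).fderiv]; exact hD0
    · intro j
      have hval := congrArg (fun T : (Fin n → ℝ) →L[ℝ] ℝ => T (Pi.single j 1)) hD0
      simp only [ContinuousLinearMap.sum_apply, ContinuousLinearMap.smul_apply,
        ContinuousLinearMap.zero_apply, smul_eq_mul] at hval
      have hLs : ∀ i, L i (Pi.single j 1) = (e i j : ℝ) := by
        intro i
        rw [hLapp]
        simp [Pi.single_apply, mul_ite]
      have hexp : ∀ i, Real.exp (L i u₀) = ∏ l, Real.exp (u₀ l) ^ (e i l) := by
        intro i
        rw [hLapp, Real.exp_sum]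
        exact Finset.prod_congr rfl fun l _ => exp_intCast_mul _ _
      calc ∑ i, a i * (e i j : ℝ) * ∏ l, Real.exp (u₀ l) ^ (e i l)
          = ∑ i, a i * Real.exp (L i u₀) * L i (Pi.single j 1) := by
            refine Finset.sum_congr rfl fun i _ => ?_
            rw [hLs, hexp]; ring
        _ = 0 := hval
end

section
/- Let K be a field, R = K[x_1, …, x_r], and φ : R → A a surjective K-algebra homomorphism onto a finite-dimensional K-algebra A, with ker φ generated by p_1, …, p_m ∈ R. Let R̂ = R[[t]] (power series in t over R), let B be a K[[t]]-algebra that is free of finite rank as a K[[t]]-module, and let ψ : R̂ → B be a continuous K[[t]]-algebra homomorphism whose reduction modulo t is identified with φ (via an isomorphism B/tB ≅ A compatible with ψ mod t). Suppose there exist elements P_j = p_j + q_j ∈ ker ψ with q_j ∈ t·R̂ for j = 1, …, m. Then ψ is surjective and ker ψ is generated by P_1, …, P_m; in particular B ≅ R[[t]]/(P_1, …, P_m). -/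
set_option synthInstance.maxHeartbeats 1000000
set_option maxHeartbeats 1000000

lemma aux_ps_sep {R : Type*} [CommRing R] (f : PowerSeries R)
    (h : ∀ N : ℕ, f ∈ (Ideal.span {(PowerSeries.X : PowerSeries R)}) ^ N) : f = 0 := by
  ext n
  have hn := h (n + 1)
  rw [Ideal.span_singleton_pow, Ideal.mem_span_singleton] at hn
  have := PowerSeries.X_pow_dvd_iff.mp hn n (Nat.lt_succ_self n)
  simpa using this

lemma aux_ps_sep' {K : Type} [Field K] (g : PowerSeries K)
    (h : ∀ k : ℕ, (PowerSeries.X : PowerSeries K) ^ k ∣ g) : g = 0 := by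
  ext n
  have := PowerSeries.X_pow_dvd_iff.mp (h (n + 1)) n (Nat.lt_succ_self n)
  simpa using this

lemma aux_free_sep (K : Type) [Field K] (B : Type) [CommRing B] [Algebra (PowerSeries K) B]
    [Module.Free (PowerSeries K) B] (b : B)
    (h : ∀ k : ℕ, b ∈ (Ideal.span {algebraMap (PowerSeries K) B PowerSeries.X}) ^ k) :
    b = 0 := by
  let e := Module.Free.chooseBasis (PowerSeries K) B
  have hrepr : e.repr b = 0 := by
    refine Finsupp.ext fun i => ?_
    have hi : ∀ k : ℕ, (PowerSeries.X : PowerSeries K) ^ k ∣ e.repr b i := by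
      intro k
      have hk := h k
      rw [Ideal.span_singleton_pow, Ideal.mem_span_singleton] at hk
      obtain ⟨c, hc⟩ := hk
      have hb : b = (PowerSeries.X : PowerSeries K) ^ k • c := by
        rw [Algebra.smul_def, map_pow, ← hc]
      refine ⟨e.repr c i, ?_⟩
      rw [hb, map_smul, Finsupp.smul_apply, smul_eq_mul]
    exact aux_ps_sep' _ hi
  exact (LinearEquiv.map_eq_zero_iff e.repr).mp hrepr

lemma aux_monomial_eq {R : Type*} [CommRing R] (n : ℕ) (a : R) :
    PowerSeries.monomial n a = PowerSeries.C a * PowerSeries.X ^ n := by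
  ext k
  rw [PowerSeries.coeff_monomial, PowerSeries.coeff_C_mul_X_pow]

lemma aux_dvd_mk {R : Type*} [CommRing R] (y : ℕ → R) (N : ℕ) :
    (PowerSeries.X : PowerSeries R) ^ N ∣
      (PowerSeries.mk y - ∑ n ∈ Finset.range N, PowerSeries.monomial n (y n)) := by
  rw [PowerSeries.X_pow_dvd_iff]
  intro i hi
  rw [map_sub, PowerSeries.coeff_mk, map_sum]
  simp only [PowerSeries.coeff_monomial]
  rw [Finset.sum_ite_eq (Finset.range N) i y]
  simp [hi]

/-- McDuff–Tolman algebraic trick. Let `φ : R = K[x_1,…,x_r] → A` be a surjective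
`K`-algebra map onto a finite-dimensional algebra, with kernel generated by
`p_1,…,p_m`. Let `B` be a `K[[t]]`-algebra, free of finite rank as a `K[[t]]`-module,
and `ψ : R[[t]] → B` a continuous `K[[t]]`-algebra homomorphism (continuity for the
`t`-adic topologies) whose reduction mod `t` is identified with `φ` via an isomorphism
`θ : B/tB ≅ A`. If there are `P_j = p_j + q_j ∈ ker ψ` with `q_j ∈ t·R[[t]]`, then
`ψ` is surjective with kernel generated by the `P_j`; in particular
`B ≅ R[[t]]/(P_1,…,P_m)`. -/
theorem mcduff_tolman_presentation_trick
    (K : Type) [Field K] (r m : ℕ)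
    (A : Type) [CommRing A] [Algebra K A] [FiniteDimensional K A]
    (φ : MvPolynomial (Fin r) K →ₐ[K] A) (hφ : Function.Surjective φ)
    (p : Fin m → MvPolynomial (Fin r) K)
    (hker : RingHom.ker (φ : MvPolynomial (Fin r) K →+* A) = Ideal.span (Set.range p))
    (B : Type) [CommRing B] [Algebra (PowerSeries K) B]
    [Module.Free (PowerSeries K) B] [Module.Finite (PowerSeries K) B]
    [Algebra K B] [IsScalarTower K (PowerSeries K) B]
    (ψ : PowerSeries (MvPolynomial (Fin r) K) →+* B)
    -- `ψ` is a `K[[t]]`-algebra homomorphism: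
    (hψalg : ∀ g : PowerSeries K,
      ψ (PowerSeries.map (algebraMap K (MvPolynomial (Fin r) K)) g) =
        algebraMap (PowerSeries K) B g)
    -- `ψ` is continuous for the `t`-adic topologies:
    (hcont : ∀ k : ℕ, ∃ N : ℕ,
      ∀ x ∈ (Ideal.span {(PowerSeries.X : PowerSeries (MvPolynomial (Fin r) K))}) ^ N,
        ψ x ∈ (Ideal.span {algebraMap (PowerSeries K) B PowerSeries.X}) ^ k)
    -- the reduction of `ψ` mod `t` is identified with `φ` via `θ : B/tB ≅ A`:
    (θ : (B ⧸ Ideal.span {algebraMap (PowerSeries K) B PowerSeries.X}) ≃ₐ[K] A)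
    (hθ : ∀ x : MvPolynomial (Fin r) K,
      θ (Ideal.Quotient.mk _ (ψ (PowerSeries.C x : PowerSeries (MvPolynomial (Fin r) K)))) = φ x)
    (P : Fin m → PowerSeries (MvPolynomial (Fin r) K))
    (hPker : ∀ j, ψ (P j) = 0)
    (hPq : ∀ j, P j - (PowerSeries.C (p j) : PowerSeries (MvPolynomial (Fin r) K)) ∈
      Ideal.span {(PowerSeries.X : PowerSeries (MvPolynomial (Fin r) K))}) :
    Function.Surjective ψ ∧
    RingHom.ker ψ = Ideal.span (Set.range P) ∧
    Nonempty ((PowerSeries (MvPolynomial (Fin r) K) ⧸ Ideal.span (Set.range P)) ≃+* B) := by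
  classical
  have hψX : ψ (PowerSeries.X : PowerSeries (MvPolynomial (Fin r) K)) = (algebraMap (PowerSeries K) B PowerSeries.X) := by
    have h := hψalg PowerSeries.X
    rwa [PowerSeries.map_X] at h
  have hψmon : ∀ (n : ℕ) (a : (MvPolynomial (Fin r) K)),
      ψ (PowerSeries.monomial n a) = (algebraMap (PowerSeries K) B PowerSeries.X) ^ n * ψ (PowerSeries.C a) := by
    intro n a
    rw [aux_monomial_eq, map_mul, map_pow, hψX, mul_comm]
  -- t is regular on B
  have hτreg : ∀ c : B, (algebraMap (PowerSeries K) B PowerSeries.X) * c = 0 → c = 0 := by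
    intro c hc
    have h1 : (PowerSeries.X : PowerSeries K) • c = 0 := by
      rw [Algebra.smul_def]; exact hc
    rcases smul_eq_zero.mp h1 with h | h
    · exact absurd h PowerSeries.X_ne_zero
    · exact h
  -- Surjectivity
  have step : ∀ b : B, ∃ xc : (MvPolynomial (Fin r) K) × B, b = ψ (PowerSeries.C xc.1) + (algebraMap (PowerSeries K) B PowerSeries.X) * xc.2 := by
    intro b
    obtain ⟨x, hx⟩ := hφ (θ (Ideal.Quotient.mk _ b))
    have h2 : Ideal.Quotient.mk (Ideal.span {(algebraMap (PowerSeries K) B PowerSeries.X)}) (ψ (PowerSeries.C x)) =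
        Ideal.Quotient.mk (Ideal.span {(algebraMap (PowerSeries K) B PowerSeries.X)}) b := θ.injective (by rw [hθ, hx])
    have h3 : b - ψ (PowerSeries.C x) ∈ Ideal.span {(algebraMap (PowerSeries K) B PowerSeries.X)} :=
      (Ideal.Quotient.mk_eq_mk_iff_sub_mem b (ψ (PowerSeries.C x))).mp h2.symm
    obtain ⟨c, hc⟩ := Ideal.mem_span_singleton.mp h3
    exact ⟨(x, c), by rw [← hc]; ring⟩
  have hsurj : Function.Surjective ψ := by
    intro b
    let s : ℕ → B := fun n => Nat.rec b (fun _ prev => (step prev).choose.2) n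
    let x : ℕ → (MvPolynomial (Fin r) K) := fun n => (step (s n)).choose.1
    have hs : ∀ n, s n = ψ (PowerSeries.C (x n)) + (algebraMap (PowerSeries K) B PowerSeries.X) * s (n + 1) :=
      fun n => (step (s n)).choose_spec
    have hsum : ∀ N, b = (∑ n ∈ Finset.range N, (algebraMap (PowerSeries K) B PowerSeries.X) ^ n * ψ (PowerSeries.C (x n)))
        + (algebraMap (PowerSeries K) B PowerSeries.X) ^ N * s N := by
      intro N
      induction N with
      | zero => simp [s]
      | succ N ih =>
        rw [Finset.sum_range_succ]
        calc b = (∑ n ∈ Finset.range N, (algebraMap (PowerSeries K) B PowerSeries.X) ^ n * ψ (PowerSeries.C (x n))) + (algebraMap (PowerSeries K) B PowerSeries.X) ^ N * s N := ih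
        _ = (∑ n ∈ Finset.range N, (algebraMap (PowerSeries K) B PowerSeries.X) ^ n * ψ (PowerSeries.C (x n)))
            + (algebraMap (PowerSeries K) B PowerSeries.X) ^ N * (ψ (PowerSeries.C (x N)) + (algebraMap (PowerSeries K) B PowerSeries.X) * s (N + 1)) := by rw [← hs N]
        _ = ((∑ n ∈ Finset.range N, (algebraMap (PowerSeries K) B PowerSeries.X) ^ n * ψ (PowerSeries.C (x n)))
            + (algebraMap (PowerSeries K) B PowerSeries.X) ^ N * ψ (PowerSeries.C (x N))) + (algebraMap (PowerSeries K) B PowerSeries.X) ^ (N + 1) * s (N + 1) := by ring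
    refine ⟨PowerSeries.mk x, ?_⟩
    have key : ∀ k : ℕ, ψ (PowerSeries.mk x) - b ∈ (Ideal.span {(algebraMap (PowerSeries K) B PowerSeries.X)}) ^ k := by
      intro k
      obtain ⟨N₀, hN₀⟩ := hcont k
      set N := max N₀ k with hN
      have hψS : ψ (∑ n ∈ Finset.range N, PowerSeries.monomial n (x n))
          = ∑ n ∈ Finset.range N, (algebraMap (PowerSeries K) B PowerSeries.X) ^ n * ψ (PowerSeries.C (x n)) := by
        rw [map_sum]
        exact Finset.sum_congr rfl fun n _ => hψmon n (x n)
      have h1 : ψ (PowerSeries.mk x)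
          - ψ (∑ n ∈ Finset.range N, PowerSeries.monomial n (x n))
          ∈ (Ideal.span {(algebraMap (PowerSeries K) B PowerSeries.X)}) ^ k := by
        rw [← map_sub]
        refine hN₀ _ ?_
        have hmem : PowerSeries.mk x - ∑ n ∈ Finset.range N, PowerSeries.monomial n (x n)
            ∈ (Ideal.span {(PowerSeries.X : PowerSeries (MvPolynomial (Fin r) K))}) ^ N := by
          rw [Ideal.span_singleton_pow, Ideal.mem_span_singleton]
          exact aux_dvd_mk x N
        exact Ideal.pow_le_pow_right (le_max_left N₀ k) hmem
      have h2 : ψ (∑ n ∈ Finset.range N, PowerSeries.monomial n (x n)) - b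
          ∈ (Ideal.span {(algebraMap (PowerSeries K) B PowerSeries.X)}) ^ k := by
        rw [hψS]
        have hb : (∑ n ∈ Finset.range N, (algebraMap (PowerSeries K) B PowerSeries.X) ^ n * ψ (PowerSeries.C (x n))) - b
            = -((algebraMap (PowerSeries K) B PowerSeries.X) ^ N * s N) := by rw [hsum N]; ring
        rw [hb]
        refine neg_mem ?_
        rw [Ideal.span_singleton_pow, Ideal.mem_span_singleton]
        exact Dvd.dvd.mul_right (pow_dvd_pow (algebraMap (PowerSeries K) B PowerSeries.X) (le_max_right N₀ k)) (s N)
      have := add_mem h1 h2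
      simpa using this
    have h0 : ψ (PowerSeries.mk x) - b = 0 := aux_free_sep K B _ key
    exact sub_eq_zero.mp h0
  -- constant coefficients of the P j
  have hP0 : ∀ j, PowerSeries.constantCoeff (P j) = p j := by
    intro j
    have h := PowerSeries.X_dvd_iff.mp (Ideal.mem_span_singleton.mp (hPq j))
    rw [map_sub, PowerSeries.constantCoeff_C, sub_eq_zero] at h
    exact h
  -- kernel step
  have kstep : ∀ f : PowerSeries (MvPolynomial (Fin r) K), ψ f = 0 →
      ∃ ag : (Fin m → (MvPolynomial (Fin r) K)) × PowerSeries (MvPolynomial (Fin r) K), ψ ag.2 = 0 ∧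
        f = (∑ j, PowerSeries.C (ag.1 j) * P j) + PowerSeries.X * ag.2 := by
    intro f hf
    set f0 := PowerSeries.constantCoeff f with hf0
    obtain ⟨h, hh⟩ : (PowerSeries.X : PowerSeries (MvPolynomial (Fin r) K)) ∣ f - PowerSeries.C f0 :=
      PowerSeries.X_dvd_iff.mpr (by simp [hf0])
    have hψC : ψ (PowerSeries.C f0) ∈ Ideal.span {(algebraMap (PowerSeries K) B PowerSeries.X)} := by
      have he : ψ (PowerSeries.C f0) = -((algebraMap (PowerSeries K) B PowerSeries.X) * ψ h) := by
        have h1 := congrArg ψ hh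
        rw [map_sub, map_mul, hψX, hf] at h1
        linear_combination -h1
      rw [he]
      exact neg_mem (Ideal.mul_mem_right _ _ (Ideal.subset_span rfl))
    have hφ0 : φ f0 = 0 := by
      rw [← hθ f0, Ideal.Quotient.eq_zero_iff_mem.mpr hψC, map_zero]
    have hmem : f0 ∈ Ideal.span (Set.range p) := by
      rw [← hker]; exact hφ0
    obtain ⟨a, ha⟩ := Ideal.mem_span_range_iff_exists_fun.mp hmem
    have hg'0 : PowerSeries.constantCoeff (f - ∑ j, PowerSeries.C (a j) * P j) = 0 := by
      rw [map_sub, map_sum, ← hf0]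
      have : ∀ j ∈ Finset.univ, PowerSeries.constantCoeff (PowerSeries.C (a j) * P j)
          = a j * p j := by
        intro j _
        rw [map_mul, PowerSeries.constantCoeff_C, hP0]
      rw [Finset.sum_congr rfl this, ha, sub_self]
    obtain ⟨g, hg⟩ : (PowerSeries.X : PowerSeries (MvPolynomial (Fin r) K)) ∣
        (f - ∑ j, PowerSeries.C (a j) * P j) := PowerSeries.X_dvd_iff.mpr hg'0
    have hψg : ψ g = 0 := by
      refine hτreg _ ?_
      have h1 := congrArg ψ hg
      rw [map_mul, hψX, map_sub, map_sum, hf] at h1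
      have h2 : ∀ j ∈ Finset.univ, ψ (PowerSeries.C (a j) * P j) = 0 := by
        intro j _
        rw [map_mul, hPker, mul_zero]
      rw [Finset.sum_congr rfl h2] at h1
      simpa using h1.symm
    exact ⟨(a, g), hψg, by rw [← sub_eq_iff_eq_add']; exact hg⟩
  -- kernel equals span of the P j
  have hkerP : RingHom.ker ψ = Ideal.span (Set.range P) := by
    apply le_antisymm
    · intro f hf
      replace hf : ψ f = 0 := hf
      let fs : ℕ → {f : PowerSeries (MvPolynomial (Fin r) K) // ψ f = 0} := fun n =>
        Nat.rec ⟨f, hf⟩ (fun _ prev =>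
          ⟨(kstep prev.1 prev.2).choose.2, (kstep prev.1 prev.2).choose_spec.1⟩) n
      let a : ℕ → Fin m → (MvPolynomial (Fin r) K) := fun n => (kstep (fs n).1 (fs n).2).choose.1
      have hstep : ∀ n, (fs n).1 = (∑ j, PowerSeries.C (a n j) * P j)
          + PowerSeries.X * (fs (n + 1)).1 :=
        fun n => (kstep (fs n).1 (fs n).2).choose_spec.2
      have hsum : ∀ N, f = (∑ j, (∑ n ∈ Finset.range N,
          PowerSeries.monomial n (a n j)) * P j) + PowerSeries.X ^ N * (fs N).1 := by
        intro N
        induction N with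
        | zero => simp [fs]
        | succ N ih =>
          have hm : ∀ j, (∑ n ∈ Finset.range (N + 1), PowerSeries.monomial n (a n j))
              = (∑ n ∈ Finset.range N, PowerSeries.monomial n (a n j))
                + PowerSeries.C (a N j) * PowerSeries.X ^ N := by
            intro j; rw [Finset.sum_range_succ, aux_monomial_eq]
          calc f = (∑ j, (∑ n ∈ Finset.range N,
              PowerSeries.monomial n (a n j)) * P j) + PowerSeries.X ^ N * (fs N).1 := ih
          _ = (∑ j, (∑ n ∈ Finset.range N, PowerSeries.monomial n (a n j)) * P j)
              + PowerSeries.X ^ N * ((∑ j, PowerSeries.C (a N j) * P j)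
                + PowerSeries.X * (fs (N + 1)).1) := by rw [← hstep N]
          _ = (∑ j, (∑ n ∈ Finset.range (N + 1),
              PowerSeries.monomial n (a n j)) * P j)
              + PowerSeries.X ^ (N + 1) * (fs (N + 1)).1 := by
            simp only [hm, add_mul, Finset.sum_add_distrib, mul_add, Finset.mul_sum]
            have hc : ∀ j ∈ Finset.univ, (PowerSeries.X : PowerSeries (MvPolynomial (Fin r) K)) ^ N *
                (PowerSeries.C (a N j) * P j)
                = PowerSeries.C (a N j) * PowerSeries.X ^ N * P j := by
              intro j _; ring
            rw [Finset.sum_congr rfl hc]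
            ring
      have hfin : f = ∑ j, PowerSeries.mk (fun n => a n j) * P j := by
        have hmem : ∀ N : ℕ, f - (∑ j, PowerSeries.mk (fun n => a n j) * P j)
            ∈ (Ideal.span {(PowerSeries.X : PowerSeries (MvPolynomial (Fin r) K))}) ^ N := by
          intro N
          rw [Ideal.span_singleton_pow, Ideal.mem_span_singleton]
          have heq : f - (∑ j, PowerSeries.mk (fun n => a n j) * P j)
              = PowerSeries.X ^ N * (fs N).1
                - ∑ j, (PowerSeries.mk (fun n => a n j)
                  - ∑ n ∈ Finset.range N, PowerSeries.monomial n (a n j)) * P j := by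
            rw [hsum N]
            rw [Finset.sum_congr rfl (fun j (_ : j ∈ Finset.univ) => sub_mul
              (PowerSeries.mk (fun n => a n j))
              (∑ n ∈ Finset.range N, PowerSeries.monomial n (a n j)) (P j)),
              Finset.sum_sub_distrib]
            ring
          rw [heq]
          refine dvd_sub (Dvd.intro _ rfl) (Finset.dvd_sum fun j _ => ?_)
          exact Dvd.dvd.mul_right (aux_dvd_mk (fun n => a n j) N) (P j)
        have h0 := aux_ps_sep _ hmem
        exact sub_eq_zero.mp h0
      rw [hfin]
      exact Ideal.sum_mem _ fun j _ =>
        Ideal.mul_mem_left _ _ (Ideal.subset_span ⟨j, rfl⟩)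
    · rw [Ideal.span_le]
      rintro _ ⟨j, rfl⟩
      exact hPker j
  exact ⟨hsurj, hkerP, ⟨hkerP ▸ RingHom.quotientKerEquivOfSurjective hsurj⟩⟩
end

section
/- Let K be a field, let m ≥ k ≥ 1 be integers with the characteristic of K not dividing k, and let t ∈ K be nonzero. Define W : (K^×)^{m+1} → K by W(z_1, …, z_{m+1}) = z_1 + ⋯ + z_m + t^k·z_1^{-1}⋯z_m^{-1}·z_{m+1}^k + z_{m+1}. Then a point p ∈ (K^×)^{m+1} is a critical point of W (all Laurent partial derivatives vanish at p) if and only if p = (w, w, …, w, −kw) for some w ∈ K^× with w^{1+m−k} = (−k)^k·t^k; and in that case W(p) = (1 + m − k)·w. -/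
/-- Critical points of the superpotential
`W(z) = z₁ + ⋯ + z_m + t^k·z₁⁻¹⋯z_m⁻¹·z_{m+1}^k + z_{m+1}` of `O_{P^m}(−k)`:
a point `(p₁,…,p_m,q) ∈ (K^×)^{m+1}` is critical (all Laurent partial derivatives
vanish there) iff it equals `(w,…,w,−kw)` for some `w` with
`w^{1+m−k} = (−k)^k·t^k`; and in that case `W(p) = (1+m−k)·w`. -/
theorem superpotential_critical_points_O_minus_k
    (K : Type*) [Field K] (k m : ℕ) (hk : 1 ≤ k) (hkm : k ≤ m)
    (hchar : (k : K) ≠ 0) (t : K) (ht : t ≠ 0)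
    (p : Fin m → K) (hp : ∀ i, p i ≠ 0) (q : K) (hq : q ≠ 0) :
    (((∀ j : Fin m, 1 - t ^ k * (∏ i, (p i)⁻¹) * (p j)⁻¹ * q ^ k = 0) ∧
        (k : K) * t ^ k * (∏ i, (p i)⁻¹) * q ^ (k - 1) + 1 = 0) ↔
      ∃ w : K, (∀ i, p i = w) ∧ q = -(k : K) * w ∧
        w ^ (1 + m - k) = (-(k : K)) ^ k * t ^ k) ∧
    (∀ w : K, (∀ i, p i = w) → q = -(k : K) * w →
      w ^ (1 + m - k) = (-(k : K)) ^ k * t ^ k →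
      (∑ i, p i) + t ^ k * (∏ i, (p i)⁻¹) * q ^ k + q = ((1 + m - k : ℕ) : K) * w) := by
  have hm : 0 < m := lt_of_lt_of_le hk hkm
  have hqk : q ^ k = q * q ^ (k - 1) := by
    have := pow_succ' q (k - 1)
    rwa [Nat.sub_add_cancel hk] at this
  have hmk : 1 + m - k + k = m + 1 := by omega
  have hkk : (-(k : K)) ^ k = -(k : K) * (-(k : K)) ^ (k - 1) := by
    have := pow_succ' (-(k : K)) (k - 1)
    rwa [Nat.sub_add_cancel hk] at this
  have hprodw : ∀ w : K, (∀ i, p i = w) → (∏ i, (p i)⁻¹) = (w ^ m)⁻¹ := by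
    intro w hw
    simp [hw, Finset.prod_const, ← inv_pow]
  -- key consequence of the normalization equation
  have keyOf : ∀ w : K, w ≠ 0 → q = -(k : K) * w →
      w ^ (1 + m - k) = (-(k : K)) ^ k * t ^ k → t ^ k * q ^ k = w ^ (m + 1) := by
    intro w hw0 hqw hwk
    have hwkne : w ^ k ≠ 0 := pow_ne_zero _ hw0
    have h5 : w ^ (1 + m - k) * w ^ k = ((-(k : K)) ^ k * t ^ k) * w ^ k := by rw [hwk]
    rw [← pow_add, hmk] at h5
    rw [hqw, mul_pow]
    linear_combination -h5
  constructor
  · constructor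
    · rintro ⟨h1, h2⟩
      set w : K := t ^ k * (∏ i, (p i)⁻¹) * q ^ k with hwdef
      have hpw : ∀ i, p i = w := by
        intro i
        have hX : t ^ k * (∏ i, (p i)⁻¹) * (p i)⁻¹ * q ^ k = 1 := by
          linear_combination -(h1 i)
        calc p i = (t ^ k * (∏ i, (p i)⁻¹) * q ^ k) * ((p i)⁻¹ * p i) := by
              rw [inv_mul_cancel₀ (hp i), mul_one]
              have := hX
              calc p i = (t ^ k * (∏ i, (p i)⁻¹) * (p i)⁻¹ * q ^ k) * p i := by
                    rw [hX, one_mul]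
                _ = (t ^ k * (∏ i, (p i)⁻¹) * q ^ k) * ((p i)⁻¹ * p i) := by ring
                _ = _ := by rw [inv_mul_cancel₀ (hp i), mul_one]
          _ = w := by rw [inv_mul_cancel₀ (hp i), mul_one, hwdef]
      have hw0 : w ≠ 0 := hpw ⟨0, hm⟩ ▸ hp ⟨0, hm⟩
      have hprod : (∏ i, (p i)⁻¹) = (w ^ m)⁻¹ := hprodw w hpw
      have hwm : (w : K) ^ m ≠ 0 := pow_ne_zero _ hw0
      rw [hprod] at h1 h2
      have hA' : t ^ k * (w ^ m)⁻¹ * q ^ k = w := by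
        have h0 := h1 ⟨0, hm⟩
        rw [hpw ⟨0, hm⟩] at h0
        have h0' : t ^ k * (w ^ m)⁻¹ * w⁻¹ * q ^ k = 1 := by linear_combination -h0
        calc t ^ k * (w ^ m)⁻¹ * q ^ k
            = (t ^ k * (w ^ m)⁻¹ * w⁻¹ * q ^ k) * w := by
              rw [show t ^ k * (w ^ m)⁻¹ * w⁻¹ * q ^ k * w
                  = t ^ k * (w ^ m)⁻¹ * q ^ k * (w⁻¹ * w) by ring,
                inv_mul_cancel₀ hw0, mul_one]
          _ = w := by rw [h0', one_mul]
      have key : t ^ k * q ^ k = w ^ (m + 1) := by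
        calc t ^ k * q ^ k = t ^ k * ((w ^ m)⁻¹ * w ^ m) * q ^ k := by
              rw [inv_mul_cancel₀ hwm, mul_one]
          _ = (t ^ k * (w ^ m)⁻¹ * q ^ k) * w ^ m := by ring
          _ = w * w ^ m := by rw [hA']
          _ = w ^ (m + 1) := by rw [pow_succ]; ring
      have hA'' : t ^ k * (w ^ m)⁻¹ * q ^ (k - 1) * q = w := by
        rw [hqk] at hA'
        linear_combination hA'
      have hA2 : (k : K) * (t ^ k * (w ^ m)⁻¹ * q ^ (k - 1)) = -1 := by
        linear_combination h2
      have hqw : q = -(k : K) * w := by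
        have h3 : (k : K) * (t ^ k * (w ^ m)⁻¹ * q ^ (k - 1)) * q = -1 * q := by
          rw [hA2]
        linear_combination h3 - (k : K) * hA''
      refine ⟨w, hpw, hqw, ?_⟩
      have hwkne : w ^ k ≠ 0 := pow_ne_zero _ hw0
      have h5 : w ^ (1 + m - k) * w ^ k = ((-(k : K)) ^ k * t ^ k) * w ^ k := by
        rw [← pow_add, hmk]
        rw [hqw, mul_pow] at key
        linear_combination -key
      exact mul_right_cancel₀ hwkne h5
    · rintro ⟨w, hpw, hqw, hwk⟩
      have hw0 : w ≠ 0 := hpw ⟨0, hm⟩ ▸ hp ⟨0, hm⟩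
      have hprod : (∏ i, (p i)⁻¹) = (w ^ m)⁻¹ := hprodw w hpw
      have hwm : (w : K) ^ m ≠ 0 := pow_ne_zero _ hw0
      have key := keyOf w hw0 hqw hwk
      have h6 : w ^ (m + 1) * ((w ^ m)⁻¹ * w⁻¹) = 1 := by
        rw [pow_succ]
        field_simp
      constructor
      · intro j
        rw [hprod, hpw j]
        have h7 : t ^ k * (w ^ m)⁻¹ * w⁻¹ * q ^ k = w ^ (m + 1) * ((w ^ m)⁻¹ * w⁻¹) := by
          rw [← key]; ring
        rw [h7, h6, sub_self]
      · rw [hprod, hqw, mul_pow]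
        have e1 : (1 + m - k) + (k - 1) = m := by omega
        have hterm : (k : K) * t ^ k * (w ^ m)⁻¹ * ((-(k : K)) ^ (k - 1) * w ^ (k - 1)) = -1 := by
          have h7 : (k : K) * (-(k : K)) ^ (k - 1) = -((-(k : K)) ^ k) := by
            rw [hkk]; ring
          calc (k : K) * t ^ k * (w ^ m)⁻¹ * ((-(k : K)) ^ (k - 1) * w ^ (k - 1))
              = ((k : K) * (-(k : K)) ^ (k - 1)) * t ^ k * w ^ (k - 1) * (w ^ m)⁻¹ := by ring
            _ = -(((-(k : K)) ^ k * t ^ k) * w ^ (k - 1)) * (w ^ m)⁻¹ := by rw [h7]; ring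
            _ = -(w ^ (1 + m - k) * w ^ (k - 1)) * (w ^ m)⁻¹ := by rw [hwk]
            _ = -(w ^ m * (w ^ m)⁻¹) := by rw [← pow_add, e1]; ring
            _ = -1 := by rw [mul_inv_cancel₀ hwm]
        linear_combination hterm
  · intro w hpw hqw hwk
    have hw0 : w ≠ 0 := hpw ⟨0, hm⟩ ▸ hp ⟨0, hm⟩
    have hprod : (∏ i, (p i)⁻¹) = (w ^ m)⁻¹ := hprodw w hpw
    have hwm : (w : K) ^ m ≠ 0 := pow_ne_zero _ hw0
    have key := keyOf w hw0 hqw hwk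
    have hsum : (∑ i, p i) = (m : K) * w := by
      simp [hpw, Finset.sum_const, Finset.card_univ, nsmul_eq_mul]
    have hcast : ((1 + m - k : ℕ) : K) = 1 + (m : K) - (k : K) := by
      have h8 : (1 + m - k) + k = 1 + m := by omega
      have h9 := congrArg (Nat.cast (R := K)) h8
      push_cast at h9
      linear_combination h9
    have hmid : t ^ k * (w ^ m)⁻¹ * q ^ k = w := by
      calc t ^ k * (w ^ m)⁻¹ * q ^ k = (t ^ k * q ^ k) * (w ^ m)⁻¹ := by ring
        _ = w ^ (m + 1) * (w ^ m)⁻¹ := by rw [key]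
        _ = w := by rw [pow_succ]; field_simp
    rw [hsum, hprod, hmid, hqw, hcast]
    ring
end

section
/- Let K be a field and t ∈ K nonzero. Let W = z_1 + ⋯ + z_m + t·z_1^{-1}z_2^{-1}⋯z_m^{-1} in the Laurent polynomial ring K[z_1^{±1}, …, z_m^{±1}]. Then the Jacobian ring Jac(W) = K[z_1^{±1},…,z_m^{±1}]/(∂_{z_1}W, …, ∂_{z_m}W) is isomorphic as a K-algebra to K[x]/(x^{m+1} − t), via the map sending each z_i to x. -/
open Polynomial

/-- The formal partial derivative `∂_{z_j}` on the multivariate Laurent polynomial ring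
`K[z_1^{±1},…,z_n^{±1}] = AddMonoidAlgebra K (Fin n →₀ ℤ)`. -/
noncomputable def laurentDeriv {K : Type*} [CommRing K] {n : ℕ} (j : Fin n)
    (W : AddMonoidAlgebra K (Fin n →₀ ℤ)) : AddMonoidAlgebra K (Fin n →₀ ℤ) :=
  AddMonoidAlgebra.ofCoeff
    (Finsupp.sum W.coeff fun e a => Finsupp.single (e - Finsupp.single j 1) (a * (e j : K)))

/-- The superpotential `W = z₁ + ⋯ + z_m + t·z₁⁻¹z₂⁻¹⋯z_m⁻¹` of `P^m` as a Laurent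
polynomial. -/
noncomputable def projSpaceSuperpotential (K : Type*) [CommRing K] (m : ℕ) (t : K) :
    AddMonoidAlgebra K (Fin m →₀ ℤ) :=
  (∑ i : Fin m, AddMonoidAlgebra.single (Finsupp.single i (1 : ℤ)) (1 : K)) +
    AddMonoidAlgebra.single (-∑ i : Fin m, Finsupp.single i (1 : ℤ)) t

namespace JacProof

variable {K : Type*} [CommRing K] {n : ℕ}

lemma laurentDeriv_single (j : Fin n) (e : Fin n →₀ ℤ) (a : K) :
    laurentDeriv j (AddMonoidAlgebra.single e a : AddMonoidAlgebra K (Fin n →₀ ℤ)) =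
      AddMonoidAlgebra.single (e - Finsupp.single j 1) (a * (e j : K)) := by
  unfold laurentDeriv
  rw [AddMonoidAlgebra.coeff_single, Finsupp.sum_single_index (by simp)]; rfl

lemma laurentDeriv_add (j : Fin n) (W₁ W₂ : AddMonoidAlgebra K (Fin n →₀ ℤ)) :
    laurentDeriv j (W₁ + W₂) = laurentDeriv j W₁ + laurentDeriv j W₂ := by
  unfold laurentDeriv
  rw [AddMonoidAlgebra.coeff_add,
    Finsupp.sum_add_index' (by simp) (by intros; simp [add_mul, Finsupp.single_add])]; rfl

/-- `laurentDeriv` as an additive monoid hom. -/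
noncomputable def laurentDerivHom (j : Fin n) :
    AddMonoidAlgebra K (Fin n →₀ ℤ) →+ AddMonoidAlgebra K (Fin n →₀ ℤ) where
  toFun := laurentDeriv j
  map_zero' := by unfold laurentDeriv; simp
  map_add' := laurentDeriv_add j

noncomputable def sEl (m : ℕ) : Fin m →₀ ℤ := ∑ i : Fin m, Finsupp.single i 1

lemma sEl_apply {m : ℕ} (j : Fin m) : sEl m j = 1 := by
  classical
  simp [sEl, Finsupp.finset_sum_apply, Finsupp.single_apply]

lemma deriv_W {m : ℕ} (t : K) (j : Fin m) :
    laurentDeriv j (projSpaceSuperpotential K m t) =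
      AddMonoidAlgebra.single 0 1 - AddMonoidAlgebra.single (-(sEl m) - Finsupp.single j 1) t := by
  classical
  rw [projSpaceSuperpotential, laurentDeriv_add,
    show (∑ i : Fin m, Finsupp.single i (1:ℤ)) = sEl m from rfl]
  have h1 : laurentDeriv j (∑ i : Fin m, (AddMonoidAlgebra.single (Finsupp.single i (1 : ℤ)) (1 : K) :
      AddMonoidAlgebra K (Fin m →₀ ℤ))) = AddMonoidAlgebra.single 0 1 := by
    show laurentDerivHom j _ = _
    rw [map_sum (laurentDerivHom j)]
    rw [Finset.sum_eq_single j]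
    · show laurentDeriv j _ = _
      rw [laurentDeriv_single]
      simp
    · intro i _ hij
      show laurentDeriv j _ = 0
      rw [laurentDeriv_single]
      simp [Finsupp.single_apply, hij]
    · simp
  rw [h1, laurentDeriv_single]
  have h2 : (((-sEl m) j : ℤ) : K) = -1 := by
    rw [Finsupp.coe_neg, Pi.neg_apply, sEl_apply]; push_cast; ring
  rw [h2, mul_neg_one, AddMonoidAlgebra.single_neg]; abel

noncomputable def degHom (m : ℕ) : (Fin m →₀ ℤ) →+ ℤ :=
  Finsupp.liftAddHom fun _ => AddMonoidHom.id ℤ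

@[simp] lemma degHom_single {m : ℕ} (i : Fin m) (x : ℤ) :
    degHom m (Finsupp.single i x) = x := by
  simp [degHom]

lemma degHom_sEl (m : ℕ) : degHom m (sEl m) = m := by
  rw [sEl, map_sum]
  simp

lemma single_finset_sum {m : ℕ} {ι : Type*} (σ : Finset ι) (f : ι → (Fin m →₀ ℤ)) :
    (AddMonoidAlgebra.single (∑ i ∈ σ, f i) (1 : K)) =
      ∏ i ∈ σ, AddMonoidAlgebra.single (f i) (1 : K) := by
  classical
  induction σ using Finset.induction_on with
  | empty => simpa using AddMonoidAlgebra.one_def.symm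
  | insert _ _ h ih =>
      rw [Finset.sum_insert h, Finset.prod_insert h, ← ih,
        AddMonoidAlgebra.single_mul_single, one_mul]

end JacProof

set_option maxHeartbeats 1000000 in
open JacProof in
/-- Batyrev–Givental mirror identification for `P^m`: for `t ≠ 0` in a field `K`, the
Jacobian ring `Jac(W) = K[z₁^{±1},…,z_m^{±1}]/(∂_{z₁}W,…,∂_{z_m}W)` of
`W = z₁ + ⋯ + z_m + t·z₁⁻¹⋯z_m⁻¹` is isomorphic as a `K`-algebra to
`K[x]/(x^{m+1} − t)`, via the map sending each `z_i` to `x`. -/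
theorem jacobian_ring_projective_space (K : Type*) [Field K] (m : ℕ) (t : K) (ht : t ≠ 0) :
    ∃ e : (AddMonoidAlgebra K (Fin m →₀ ℤ) ⧸
          Ideal.span (Set.range fun j => laurentDeriv j (projSpaceSuperpotential K m t)))
        ≃ₐ[K] AdjoinRoot (X ^ (m + 1) - C t),
      ∀ i : Fin m,
        e (Ideal.Quotient.mk
            (Ideal.span (Set.range fun j => laurentDeriv j (projSpaceSuperpotential K m t)))
            (AddMonoidAlgebra.single (Finsupp.single i (1 : ℤ)) (1 : K))) =
          AdjoinRoot.root (X ^ (m + 1) - C t) := by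
  classical
  set p : K[X] := X ^ (m + 1) - C t with hp
  set I : Ideal (AddMonoidAlgebra K (Fin m →₀ ℤ)) :=
    Ideal.span (Set.range fun j => laurentDeriv j (projSpaceSuperpotential K m t)) with hI
  set A := AdjoinRoot p with hA
  -- root is a root
  have hroot : (AdjoinRoot.root p) ^ (m + 1) = algebraMap K A t := by
    have h : (aeval (AdjoinRoot.root p)) p = 0 := by
      rw [AdjoinRoot.aeval_eq, AdjoinRoot.mk_self]
    rw [hp, map_sub, map_pow, aeval_X, aeval_C, sub_eq_zero] at h
    exact h
  -- the image of t is a unit in A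
  set tu : Aˣ := Units.map (algebraMap K A).toMonoidHom (Units.mk0 t ht) with htu
  have htuval : (tu : A) = algebraMap K A t := rfl
  -- root is a unit
  have humul : (AdjoinRoot.root p) * ((tu⁻¹ : Aˣ) * (AdjoinRoot.root p) ^ m) = 1 := by
    rw [mul_left_comm, ← pow_succ', hroot, ← htuval, Units.inv_mul]
  set u : Aˣ := ⟨AdjoinRoot.root p, (tu⁻¹ : Aˣ) * (AdjoinRoot.root p) ^ m, humul,
    by rw [← humul]; ring⟩ with hu
  have hupow : u ^ (m + 1) = tu := by
    ext
    push_cast [hu]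
    exact hroot.trans htuval.symm
  -- the forward algebra hom
  set F : Multiplicative (Fin m →₀ ℤ) →* A :=
    (Units.coeHom A).comp ((zpowersHom Aˣ u).comp (AddMonoidHom.toMultiplicative (degHom m)))
    with hF
  have hFapp : ∀ e : Fin m →₀ ℤ, F (Multiplicative.ofAdd e) = ((u ^ degHom m e : Aˣ) : A) :=
    fun e => rfl
  set φ : AddMonoidAlgebra K (Fin m →₀ ℤ) →ₐ[K] A :=
    AddMonoidAlgebra.lift K A (Fin m →₀ ℤ) F with hφ
  have hφsingle : ∀ (e : Fin m →₀ ℤ) (a : K),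
      φ (AddMonoidAlgebra.single e a) = a • ((u ^ degHom m e : Aˣ) : A) := by
    intro e a
    rw [hφ, AddMonoidAlgebra.lift_single]
    rfl
  -- φ kills the generators
  have hφgen : ∀ j : Fin m, φ (laurentDeriv j (projSpaceSuperpotential K m t)) = 0 := by
    intro j
    rw [deriv_W, map_sub, hφsingle, hφsingle]
    have hdeg : degHom m (-(sEl m) - Finsupp.single j 1) = -((m + 1 : ℕ) : ℤ) := by
      rw [map_sub, map_neg, degHom_sEl, degHom_single]; push_cast; ring
    rw [hdeg, map_zero, zpow_zero, one_smul, zpow_neg, zpow_natCast, hupow, sub_eq_zero,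
      Algebra.smul_def, ← htuval]
    exact (Units.mul_inv tu).symm
  have hIker : ∀ a ∈ I, φ a = 0 := by
    have hle : I ≤ RingHom.ker φ := by
      rw [hI]
      refine Ideal.span_le.mpr ?_
      rintro x ⟨j, rfl⟩
      exact RingHom.mem_ker.mpr (hφgen j)
    exact fun a ha => RingHom.mem_ker.mp (hle ha)
  set φbar := Ideal.Quotient.liftₐ I φ hIker with hφbar
  have hφbarq : ∀ x, φbar (Ideal.Quotient.mkₐ K I x) = φ x :=
    fun x => DFunLike.congr_fun (Ideal.Quotient.liftₐ_comp I φ hIker) x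
  -- the quotient side
  set Q := AddMonoidAlgebra K (Fin m →₀ ℤ) ⧸ I with hQ
  set q : AddMonoidAlgebra K (Fin m →₀ ℤ) →ₐ[K] Q := Ideal.Quotient.mkₐ K I with hq
  set y : Q := q (AddMonoidAlgebra.single (-(sEl m)) t) with hy
  have hrel : ∀ j : Fin m, q (AddMonoidAlgebra.single (-(sEl m) - Finsupp.single j 1) t) = 1 := by
    intro j
    have hmem : laurentDeriv j (projSpaceSuperpotential K m t) ∈ I := by
      rw [hI]; exact Ideal.subset_span ⟨j, rfl⟩
    have h0 : q (laurentDeriv j (projSpaceSuperpotential K m t)) = 0 := by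
      show Ideal.Quotient.mk I _ = 0
      exact (Ideal.Quotient.eq_zero_iff_mem).mpr hmem
    rw [deriv_W, map_sub] at h0
    have h1 : q (AddMonoidAlgebra.single (0 : Fin m →₀ ℤ) (1:K)) = 1 := by
      rw [show (AddMonoidAlgebra.single (0 : Fin m →₀ ℤ) (1:K)) =
        (1 : AddMonoidAlgebra K (Fin m →₀ ℤ)) from rfl]
      exact q.toRingHom.map_one
    rw [h1, sub_eq_zero] at h0
    exact h0.symm
  have hZ : ∀ i : Fin m, q (AddMonoidAlgebra.single (Finsupp.single i (1:ℤ)) (1:K)) = y := by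
    intro i
    have hsplit : (AddMonoidAlgebra.single (-(sEl m)) t : AddMonoidAlgebra K (Fin m →₀ ℤ)) =
        AddMonoidAlgebra.single (-(sEl m) - Finsupp.single i 1) t *
          AddMonoidAlgebra.single (Finsupp.single i 1) 1 := by
      rw [AddMonoidAlgebra.single_mul_single, mul_one, sub_add_cancel]
    rw [hy, hsplit, map_mul, hrel, one_mul]
  have hym : y ^ m = q (AddMonoidAlgebra.single (sEl m) 1) := by
    rw [show sEl m = ∑ i : Fin m, Finsupp.single i (1:ℤ) from rfl,
      single_finset_sum, map_prod, Finset.prod_congr rfl (fun i _ => hZ i),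
      Finset.prod_const, Finset.card_univ, Fintype.card_fin]
  have hypow : y ^ (m + 1) = algebraMap K Q t := by
    rw [pow_succ, hym, hy, ← map_mul, AddMonoidAlgebra.single_mul_single, one_mul]
    rw [show (sEl m + -(sEl m)) = (0 : Fin m →₀ ℤ) by abel]
    rw [show (AddMonoidAlgebra.single (0 : Fin m →₀ ℤ) t) =
      algebraMap K (AddMonoidAlgebra K (Fin m →₀ ℤ)) t from rfl]
    exact q.commutes t
  have haev : aeval y p = 0 := by
    rw [hp, map_sub, map_pow, aeval_X, aeval_C, hypow, sub_self]
  set ψ : A →ₐ[K] Q := AdjoinRoot.liftAlgHom p (Algebra.ofId K Q) y haev with hψ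
  set ψm : A →* Q := ψ.toRingHom.toMonoidHom with hψm
  set v : Qˣ := Units.map ψm u with hv
  have hvval : (v : Q) = y := by
    rw [hv, Units.coe_map, hψm]
    show ψ (AdjoinRoot.root p) = y
    exact AdjoinRoot.liftAlgHom_root _ _ _ haev
  -- the key multiplicativity identity
  set Zof : Multiplicative (Fin m →₀ ℤ) →* Q :=
    (q.toRingHom.toMonoidHom).comp (AddMonoidAlgebra.of K (Fin m →₀ ℤ)) with hZof
  set Zu : Multiplicative (Fin m →₀ ℤ) →* Qˣ := Zof.toHomUnits with hZu
  set Vu : Multiplicative (Fin m →₀ ℤ) →* Qˣ :=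
    (zpowersHom Qˣ v).comp (AddMonoidHom.toMultiplicative (degHom m)) with hVu
  have huvsingle : ∀ i : Fin m,
      Zu (Multiplicative.ofAdd (Finsupp.single i (1:ℤ))) =
        Vu (Multiplicative.ofAdd (Finsupp.single i (1:ℤ))) := by
    intro i
    apply Units.ext
    have hL : (Zu (Multiplicative.ofAdd (Finsupp.single i (1:ℤ))) : Q) =
        q (AddMonoidAlgebra.single (Finsupp.single i (1:ℤ)) (1:K)) := rfl
    have hR : (Vu (Multiplicative.ofAdd (Finsupp.single i (1:ℤ))) : Q) =
        ((v ^ degHom m (Finsupp.single i (1:ℤ)) : Qˣ) : Q) := rfl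
    rw [hL, hR, degHom_single, zpow_one, hvval, hZ]
  have huv : Zu = Vu := by
    apply Finsupp.mulHom_ext
    intro x n
    have hsm : (Multiplicative.ofAdd (Finsupp.single x n)) =
        (Multiplicative.ofAdd (Finsupp.single x (1:ℤ))) ^ n := by
      rw [← ofAdd_zsmul]
      congr 1
      rw [Finsupp.smul_single]
      norm_num
    rw [hsm, map_zpow, map_zpow, huvsingle]
  have key : ∀ e : Fin m →₀ ℤ,
      q (AddMonoidAlgebra.single e (1:K)) = ((v ^ degHom m e : Qˣ) : Q) := by
    intro e
    have h1 : q (AddMonoidAlgebra.single e (1:K)) = ((Zu (Multiplicative.ofAdd e) : Qˣ) : Q) := rfl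
    rw [h1, huv]
    rfl
  have hψu : ∀ d : ℤ, ψ ((u ^ d : Aˣ) : A) = ((v ^ d : Qˣ) : Q) := by
    intro d
    have h1 : ψ ((u ^ d : Aˣ) : A) = ((Units.map ψm (u ^ d) : Qˣ) : Q) :=
      (Units.coe_map ψm (u ^ d)).symm
    rw [h1, map_zpow, hv]
  -- the two compositions
  have h2comp : ψ.comp φbar = AlgHom.id K Q := by
    apply Ideal.Quotient.algHom_ext
    apply AddMonoidAlgebra.algHom_ext
    intro e
    show ψ (φbar (Ideal.Quotient.mkₐ K I (AddMonoidAlgebra.single e (1:K)))) =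
      Ideal.Quotient.mkₐ K I (AddMonoidAlgebra.single e (1:K))
    rw [hφbarq, hφsingle, one_smul, hψu]
    exact (key e).symm
    exact Subsingleton.elim _ _
  have hun : tu * u ^ (-(m:ℤ)) = u := by
    rw [← hupow, ← zpow_natCast u (m+1), ← zpow_add]
    norm_num
  have h1comp : φbar.comp ψ = AlgHom.id K A := by
    apply AdjoinRoot.algHom_ext
    show φbar (ψ (AdjoinRoot.root p)) = AdjoinRoot.root p
    rw [hψ]
    rw [show (AdjoinRoot.liftAlgHom p (Algebra.ofId K Q) y haev) (AdjoinRoot.root p) = y from AdjoinRoot.liftAlgHom_root _ _ _ haev,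
      hy, hq, hφbarq, hφsingle]
    have hdeg2 : degHom m (-(sEl m)) = -(m:ℤ) := by rw [map_neg, degHom_sEl]
    rw [hdeg2, Algebra.smul_def, ← htuval]
    calc (tu : A) * ((u ^ (-(m:ℤ)) : Aˣ) : A) = ((tu * u ^ (-(m:ℤ)) : Aˣ) : A) := rfl
      _ = ((u : Aˣ) : A) := by rw [hun]
      _ = AdjoinRoot.root p := rfl
  refine ⟨AlgEquiv.ofAlgHom φbar ψ h1comp h2comp, fun i => ?_⟩
  show φbar (Ideal.Quotient.mk I (AddMonoidAlgebra.single (Finsupp.single i (1:ℤ)) (1:K))) =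
    AdjoinRoot.root p
  have hmk : Ideal.Quotient.mk I (AddMonoidAlgebra.single (Finsupp.single i (1:ℤ)) (1:K)) =
      Ideal.Quotient.mkₐ K I (AddMonoidAlgebra.single (Finsupp.single i (1:ℤ)) (1:K)) := rfl
  rw [hmk, hφbarq, hφsingle, degHom_single, one_smul, zpow_one]
end
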